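/- For any regulated function f : [a,b] → E into a metric space and c > 0, the infimum of total variations over all g within uniform distance c/2 of f satisfies TV(f,[a,b],c) ≤ inf_{g : ‖f−g‖_∞ ≤ c/2} TV(g,[a,b],0) ≤ 2 · TV(f,[a,b],c/4). -/

import Mathlib

open Set Filter Topology ENNReal

noncomputable def truncVar {E : Type*} [PseudoMetricSpace E] (f : ℝ → E) (a b δ : ℝ) : ℝ≥0∞ :=
  ⨆ (n : ℕ) (t : Fin (n + 1) → ℝ) (_ : StrictMono t) (_ : ∀ i, t i ∈ Set.Icc a b),
    ENNReal.ofReal (∑ i : Fin n, max (dist (f (t i.succ)) (f (t i.castSucc)) - δ) 0)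

def Regulated {E : Type*} [PseudoMetricSpace E] (f : ℝ → E) (a b : ℝ) : Prop :=
  (∀ t ∈ Set.Ico a b, ∃ L, Filter.Tendsto f (nhdsWithin t (Set.Ioi t)) (nhds L)) ∧
  (∀ t ∈ Set.Ioc a b, ∃ L, Filter.Tendsto f (nhdsWithin t (Set.Iio t)) (nhds L))

namespace TVAux

variable {E : Type*} [PseudoMetricSpace E]

noncomputable def pairSum (f : ℝ → E) (δ : ℝ) : List ℝ → ℝ
  | x :: y :: l => max (dist (f y) (f x) - δ) 0 + pairSum f δ (y :: l)
  | _ => 0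

@[simp] lemma pairSum_nil (f : ℝ → E) (δ : ℝ) : pairSum f δ [] = 0 := rfl
@[simp] lemma pairSum_single (f : ℝ → E) (δ x : ℝ) : pairSum f δ [x] = 0 := rfl
@[simp] lemma pairSum_cons (f : ℝ → E) (δ x y : ℝ) (l : List ℝ) :
    pairSum f δ (x :: y :: l) = max (dist (f y) (f x) - δ) 0 + pairSum f δ (y :: l) := rfl

lemma pairSum_nonneg (f : ℝ → E) (δ : ℝ) : ∀ l, 0 ≤ pairSum f δ l
  | [] => le_refl 0
  | [_] => le_refl 0
  | _ :: y :: l => add_nonneg (le_max_right _ _) (pairSum_nonneg f δ (y :: l))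

noncomputable def listVar (f : ℝ → E) (a b δ : ℝ) : ℝ≥0∞ :=
  ⨆ (l : List ℝ) (_ : l.Chain' (· < ·)) (_ : ∀ x ∈ l, x ∈ Set.Icc a b),
    ENNReal.ofReal (pairSum f δ l)

lemma le_truncVar {f : ℝ → E} {a b δ : ℝ} {n : ℕ} {t : Fin (n + 1) → ℝ}
    (h1 : StrictMono t) (h2 : ∀ i, t i ∈ Set.Icc a b) :
    ENNReal.ofReal (∑ i : Fin n, max (dist (f (t i.succ)) (f (t i.castSucc)) - δ) 0) ≤
      truncVar f a b δ :=
  le_iSup_of_le n (le_iSup_of_le t (le_iSup_of_le h1 (le_iSup_of_le h2 le_rfl)))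

lemma le_listVar {f : ℝ → E} {a b δ : ℝ} {l : List ℝ}
    (h1 : l.Chain' (· < ·)) (h2 : ∀ x ∈ l, x ∈ Set.Icc a b) :
    ENNReal.ofReal (pairSum f δ l) ≤ listVar f a b δ :=
  le_iSup_of_le l (le_iSup_of_le h1 (le_iSup_of_le h2 le_rfl))

lemma pairSum_ofFn (f : ℝ → E) (δ : ℝ) : ∀ (n : ℕ) (t : Fin (n + 1) → ℝ),
    pairSum f δ (List.ofFn t) = ∑ i : Fin n, max (dist (f (t i.succ)) (f (t i.castSucc)) - δ) 0 := by
  intro n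
  induction n with
  | zero => intro t; simp
  | succ n ih =>
    intro t
    rw [List.ofFn_succ, List.ofFn_succ, pairSum_cons]
    have hrw : (t (Fin.succ 0) :: List.ofFn fun i : Fin n => t i.succ.succ) =
        List.ofFn (fun i : Fin (n+1) => t i.succ) := (List.ofFn_succ (f := fun i : Fin (n+1) => t i.succ)).symm
    rw [hrw, ih (fun i => t i.succ), Fin.sum_univ_succ]
    congr 1

lemma truncVar_eq_listVar (f : ℝ → E) (a b δ : ℝ) : truncVar f a b δ = listVar f a b δ := by
  apply le_antisymm
  · apply iSup_le; intro n; apply iSup_le; intro t; apply iSup_le; intro hm; apply iSup_le; intro hmem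
    rw [← pairSum_ofFn]
    apply le_listVar
    · refine List.isChain_iff_pairwise.mpr ?_; rw [List.pairwise_iff_get]
      intro i j hij
      rw [List.get_ofFn, List.get_ofFn]
      exact hm (by simpa using hij)
    · intro x hx
      rw [List.mem_ofFn] at hx
      obtain ⟨i, rfl⟩ := hx
      exact hmem i
  · apply iSup_le; intro l; apply iSup_le; intro hch; apply iSup_le; intro hmem
    match l with
    | [] => simp
    | x0 :: l0 =>
      have hlen : (x0 :: l0).length = l0.length + 1 := rfl
      set t : Fin (l0.length + 1) → ℝ := (x0 :: l0).get with ht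
      have hofn : List.ofFn t = x0 :: l0 := List.ofFn_get _
      have hmono : StrictMono t := by
        intro i j hij
        have := (List.isChain_iff_pairwise.mp hch)
        rw [List.pairwise_iff_get] at this
        exact this i j hij
      have hmem' : ∀ i, t i ∈ Set.Icc a b := fun i => hmem _ (List.get_mem (x0 :: l0) i)
      calc ENNReal.ofReal (pairSum f δ (x0 :: l0))
          = ENNReal.ofReal (pairSum f δ (List.ofFn t)) := by rw [hofn]
        _ = ENNReal.ofReal (∑ i : Fin l0.length,
              max (dist (f (t i.succ)) (f (t i.castSucc)) - δ) 0) := by rw [pairSum_ofFn]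
        _ ≤ truncVar f a b δ := le_truncVar hmono hmem'



lemma superadd {f : ℝ → E} {x y b δ : ℝ} (hxy : x < y) (hyb : y ≤ b) :
    ENNReal.ofReal (max (dist (f y) (f x) - δ) 0) + truncVar f y b δ ≤ truncVar f x b δ := by
  have hxb : x ≤ b := hxy.le.trans hyb
  have hxmem : x ∈ Set.Icc x b := ⟨le_refl x, hxb⟩
  have hymem : y ∈ Set.Icc x b := ⟨hxy.le, hyb⟩
  rw [truncVar_eq_listVar f y b δ, truncVar_eq_listVar f x b δ]
  have base : ENNReal.ofReal (max (dist (f y) (f x) - δ) 0) ≤ listVar f x b δ := by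
    have := le_listVar (f := f) (δ := δ) (l := [x, y])
      (List.isChain_pair.mpr hxy) (by intro z hz; simp at hz; rcases hz with rfl | rfl <;> assumption)
    simpa using this
  have key : ∀ l : List ℝ, l.Chain' (· < ·) → (∀ z ∈ l, z ∈ Set.Icc y b) →
      ENNReal.ofReal (max (dist (f y) (f x) - δ) 0) + ENNReal.ofReal (pairSum f δ l) ≤
        listVar f x b δ := by
    intro l hch hmem
    match l with
    | [] => simpa using base
    | z :: l0 =>
      have hmem' : ∀ w ∈ z :: l0, w ∈ Set.Icc x b := by
        intro w hw
        exact ⟨hxy.le.trans (hmem w hw).1, (hmem w hw).2⟩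
      have hyz : y ≤ z := (hmem z (List.mem_cons_self)).1
      rcases eq_or_lt_of_le hyz with rfl | hyz'
      · rw [← ENNReal.ofReal_add (le_max_right _ _) (pairSum_nonneg f δ _), ← pairSum_cons]
        exact le_listVar (List.isChain_cons_cons.mpr ⟨hxy, hch⟩) (by
          intro w hw
          rcases List.mem_cons.mp hw with rfl | hw'
          · exact hxmem
          · exact hmem' w hw')
      · calc ENNReal.ofReal (max (dist (f y) (f x) - δ) 0) + ENNReal.ofReal (pairSum f δ (z :: l0))
            ≤ ENNReal.ofReal (pairSum f δ (x :: y :: z :: l0)) := by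
              rw [pairSum_cons, pairSum_cons]
              rw [← ENNReal.ofReal_add (le_max_right _ _) (pairSum_nonneg f δ _)]
              apply ENNReal.ofReal_le_ofReal
              have := le_max_right (dist (f z) (f y) - δ) 0
              nlinarith [pairSum_nonneg f δ (z :: l0), le_max_right (dist (f z) (f y) - δ) (0:ℝ)]
          _ ≤ listVar f x b δ := le_listVar
              (by
                refine List.isChain_cons_cons.mpr ?_
                exact ⟨hxy, List.isChain_cons_cons.mpr ⟨hyz', hch⟩⟩)
              (by
                intro w hw
                rcases List.mem_cons.mp hw with rfl | hw'
                · exact hxmem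
                rcases List.mem_cons.mp hw' with rfl | hw''
                · exact hymem
                · exact hmem' w hw'')
  rw [listVar, ENNReal.add_iSup]
  apply iSup_le
  intro l
  by_cases h1 : l.Chain' (· < ·)
  · by_cases h2 : ∀ z ∈ l, z ∈ Set.Icc y b
    · rw [iSup_pos h1, iSup_pos h2]
      exact key l h1 h2
    · rw [iSup_pos h1, iSup_neg h2]
      simpa using base
  · rw [iSup_neg h1]
    simpa using base

lemma dist_chain (v : ℕ → E) : ∀ M m, m ≤ M →
    dist (v m) (v M) ≤ ∑ k ∈ Finset.Ico m M, dist (v k) (v (k + 1)) := by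
  intro M
  induction M with
  | zero => intro m hm; interval_cases m; simp
  | succ M ih =>
    intro m hm
    rcases eq_or_lt_of_le hm with rfl | hm'
    · simp
    · have hmM : m ≤ M := Nat.lt_succ_iff.mp hm'
      rw [Finset.sum_Ico_succ_top hmM]
      calc dist (v m) (v (M + 1)) ≤ dist (v m) (v M) + dist (v M) (v (M + 1)) := dist_triangle _ _ _
        _ ≤ ∑ k ∈ Finset.Ico m M, dist (v k) (v (k + 1)) + dist (v M) (v (M + 1)) := by
            exact add_le_add_left (ih m hmM) _

lemma pairSum_step (v : ℕ → E) (φ : ℝ → ℕ) (hφ : Monotone φ) (M : ℕ) :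
    ∀ l : List ℝ, l.Chain' (· < ·) → (∀ x ∈ l, φ x ≤ M) → ∀ m, (∀ x ∈ l, m ≤ φ x) →
    pairSum (fun t => v (φ t)) 0 l ≤ ∑ k ∈ Finset.Ico m M, dist (v k) (v (k + 1)) := by
  intro l
  induction l with
  | nil => intro _ _ m _; simpa using Finset.sum_nonneg (fun k _ => dist_nonneg)
  | cons x l ih =>
    intro hch hle m hge
    match l with
    | [] => simpa using Finset.sum_nonneg (fun k _ => dist_nonneg)
    | y :: l0 =>
      have hxy : x < y := (List.isChain_cons_cons.mp hch).1
      have hch' : (y :: l0).Chain' (· < ·) := (List.isChain_cons_cons.mp hch).2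
      have hxM : φ x ≤ M := hle x (List.mem_cons_self)
      have hyM : ∀ z ∈ y :: l0, φ z ≤ M := fun z hz => hle z (List.mem_cons_of_mem _ hz)
      have hyge : ∀ z ∈ y :: l0, φ y ≤ φ z := by
        intro z hz
        rcases List.mem_cons.mp hz with rfl | hz'
        · exact le_refl _
        · exact hφ (List.rel_of_pairwise_cons (List.isChain_iff_pairwise.mp hch') hz').le
      have hmx : m ≤ φ x := hge x (List.mem_cons_self)
      have hxy' : φ x ≤ φ y := hφ hxy.le
      have hyM' : φ y ≤ M := hyM y (List.mem_cons_self)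
      rw [pairSum_cons]
      have h1 : max (dist (v (φ y)) (v (φ x)) - 0) 0 = dist (v (φ x)) (v (φ y)) := by
        rw [sub_zero, dist_comm]
        exact max_eq_left dist_nonneg
      rw [h1]
      calc dist (v (φ x)) (v (φ y)) + pairSum (fun t => v (φ t)) 0 (y :: l0)
          ≤ (∑ k ∈ Finset.Ico (φ x) (φ y), dist (v k) (v (k + 1))) +
            ∑ k ∈ Finset.Ico (φ y) M, dist (v k) (v (k + 1)) := by
            exact add_le_add (dist_chain v (φ y) (φ x) hxy') (ih hch' hyM (φ y) hyge)
        _ = ∑ k ∈ Finset.Ico (φ x) M, dist (v k) (v (k + 1)) :=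
            Finset.sum_Ico_consecutive _ hxy' hyM'
        _ ≤ ∑ k ∈ Finset.Ico m M, dist (v k) (v (k + 1)) := by
            apply Finset.sum_le_sum_of_subset_of_nonneg
            · exact Finset.Ico_subset_Ico hmx (le_refl M)
            · intro k _ _; exact dist_nonneg

lemma stepTV (v : ℕ → E) (φ : ℝ → ℕ) (hφ : Monotone φ) (a b : ℝ) :
    truncVar (fun t => v (φ t)) a b 0 ≤
      ∑ k ∈ Finset.Ico (φ a) (φ b), ENNReal.ofReal (dist (v k) (v (k + 1))) := by
  rw [truncVar_eq_listVar]
  apply iSup_le; intro l; apply iSup_le; intro hch; apply iSup_le; intro hmem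
  rw [← ENNReal.ofReal_sum_of_nonneg (fun k _ => dist_nonneg)]
  apply ENNReal.ofReal_le_ofReal
  exact pairSum_step v φ hφ (φ b) l hch (fun x hx => hφ (hmem x hx).2) (φ a)
    (fun x hx => hφ (hmem x hx).1)



lemma main_ind (a b c : ℝ) (hc : 0 < c) (f : ℝ → E) (hf : Regulated f a b) :
    ∀ n : ℕ, ∀ x : ℝ, a ≤ x → x ≤ b →
      truncVar f x b (c / 4) < n * ENNReal.ofReal (c / 4) →
      ∀ ε : ℝ, 0 < ε →
      ∃ (φ : ℝ → ℕ) (v : ℕ → E), Monotone φ ∧ v (φ x) = f x ∧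
        (∀ t, x ≤ t → t ≤ b → dist (f t) (v (φ t)) ≤ c / 2) ∧
        ∑ k ∈ Finset.Ico (φ x) (φ b), ENNReal.ofReal (dist (v k) (v (k + 1))) ≤
          2 * truncVar f x b (c / 4) + ENNReal.ofReal ε := by
  intro n
  induction n with
  | zero => intro x _ _ hbud ε _; simp at hbud
  | succ n ih =>
    intro x hax hxb hbud ε hε
    set S : Set ℝ := {t | t ∈ Set.Ioc x b ∧ c / 2 < dist (f t) (f x)} with hSdef
    by_cases hSne : S.Nonempty
    swap
    · refine ⟨fun _ => 0, fun _ => f x, monotone_const, rfl, ?_, ?_⟩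
      · intro t hxt htb
        rcases eq_or_lt_of_le hxt with rfl | h
        · rw [dist_self]; linarith
        · by_contra hlt
          push_neg at hlt
          exact hSne ⟨t, ⟨⟨h, htb⟩, hlt⟩⟩
      · simp
    · obtain ⟨s0, hs0⟩ := hSne
      have hbddS : BddBelow S := ⟨x, fun t ht => ht.1.1.le⟩
      set τ := sInf S with hτdef
      have hxτ : x ≤ τ := le_csInf ⟨s0, hs0⟩ (fun t ht => ht.1.1.le)
      have hτb : τ ≤ b := (csInf_le hbddS hs0).trans hs0.1.2
      have pack : ∃ τ' T' vmid, x ≤ τ' ∧ τ' < T' ∧ T' ≤ b ∧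
          (∀ t, x ≤ t → t ≤ τ' → dist (f t) (f x) ≤ c / 2) ∧
          (∀ t, τ' < t → t < T' → dist (f t) vmid ≤ c / 2) ∧
          c / 2 < dist (f T') (f x) ∧
          dist (f x) vmid + dist vmid (f T') ≤ dist (f T') (f x) + 2 * (ε / 4) := by
        by_cases hτS : τ ∈ S
        · refine ⟨x, τ, f x, le_refl x, hτS.1.1, hτS.1.2, ?_, ?_, hτS.2, ?_⟩
          · intro t hxt htx
            have ht : t = x := le_antisymm htx hxt
            rw [ht, dist_self]; linarith
          · intro t hxt htτ
            by_contra hlt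
            push_neg at hlt
            have htS : t ∈ S := ⟨⟨hxt, htτ.le.trans hτb⟩, hlt⟩
            exact absurd (csInf_le hbddS htS) (not_le.mpr htτ)
          · rw [dist_self, zero_add, dist_comm]
            linarith
        · have hτltb : τ < b := by
            rcases eq_or_lt_of_le hτb with heq | h
            · exfalso
              have h1 : τ ≤ s0 := csInf_le hbddS hs0
              have h2 : s0 ≤ b := hs0.1.2
              have h3 : s0 = τ := le_antisymm (heq ▸ h2) h1
              exact hτS (h3 ▸ hs0)
            · exact h
          obtain ⟨L, hL⟩ := hf.1 τ ⟨hax.trans hxτ, hτltb⟩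
          have hr : 0 < min (c / 2) (ε / 4) := lt_min (by linarith) (by linarith)
          obtain ⟨d, hd, hdL⟩ := Metric.tendsto_nhdsWithin_nhds.mp hL _ hr
          have hTex : ∃ T' ∈ S, T' < τ + d := by
            by_contra hcon
            push_neg at hcon
            have : τ + d ≤ τ := le_csInf ⟨s0, hs0⟩ hcon
            linarith
          obtain ⟨T', hT'S, hT'd⟩ := hTex
          have hτT' : τ < T' := lt_of_le_of_ne (csInf_le hbddS hT'S) (fun h => hτS (h ▸ hT'S))
          have hfT'L : dist (f T') L < min (c / 2) (ε / 4) := by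
            apply hdL (Set.mem_Ioi.mpr hτT')
            rw [Real.dist_eq, abs_of_pos (by linarith)]
            linarith
          have hfT'L2 : dist (f T') L ≤ ε / 4 := hfT'L.le.trans (min_le_right _ _)
          refine ⟨τ, T', L, hxτ, hτT', hT'S.1.2, ?_, ?_, hT'S.2, ?_⟩
          · intro t hxt htτ
            rcases eq_or_lt_of_le hxt with rfl | hxt'
            · rw [dist_self]; linarith
            · by_contra hlt
              push_neg at hlt
              have htS : t ∈ S := ⟨⟨hxt', htτ.trans hτb⟩, hlt⟩
              have hτt : τ ≤ t := csInf_le hbddS htS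
              rcases eq_or_lt_of_le hτt with heq | h2
              · exact hτS (heq ▸ htS)
              · linarith
          · intro t hτt htT'
            have : dist (f t) L < min (c / 2) (ε / 4) := by
              apply hdL (Set.mem_Ioi.mpr hτt)
              rw [Real.dist_eq, abs_of_pos (by linarith)]
              linarith
            exact this.le.trans (min_le_left _ _)
          · have h1 : dist (f x) L ≤ dist (f x) (f T') + dist (f T') L := dist_triangle _ _ _
            have h2 : dist L (f T') = dist (f T') L := dist_comm _ _
            have h4 : dist (f x) (f T') = dist (f T') (f x) := dist_comm _ _
            linarith
      obtain ⟨τ', T', vmid, hxτ', hτ'T', hT'b, hP3, hPmid, hD, hglue⟩ := pack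
      set D := dist (f T') (f x) with hDdef
      set q := ENNReal.ofReal (c / 4) with hqdef
      have hxT' : x < T' := lt_of_le_of_lt hxτ' hτ'T'
      have hsup := superadd (f := f) (δ := c / 4) hxT' hT'b
      have hmax : max (dist (f T') (f x) - c / 4) 0 = D - c / 4 :=
        max_eq_left (by rw [← hDdef]; linarith)
      rw [hmax] at hsup
      have hTVx_ne : truncVar f x b (c / 4) ≠ ⊤ := ne_top_of_lt hbud
      have hTV'_le : truncVar f T' b (c / 4) ≤ truncVar f x b (c / 4) :=
        le_trans le_add_self hsup
      have hTV'_ne : truncVar f T' b (c / 4) ≠ ⊤ := by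
        intro h; exact hTVx_ne (top_le_iff.mp (h ▸ hTV'_le))
      have hbud' : truncVar f T' b (c / 4) < n * q := by
        have hqD : q < ENNReal.ofReal (D - c / 4) := by
          rw [hqdef, ENNReal.ofReal_lt_ofReal_iff (by linarith)]
          linarith
        have h5 : truncVar f T' b (c / 4) + q <
            truncVar f T' b (c / 4) + ENNReal.ofReal (D - c / 4) :=
          ENNReal.add_lt_add_left hTV'_ne hqD
        have h6 : truncVar f T' b (c / 4) + ENNReal.ofReal (D - c / 4) ≤ truncVar f x b (c / 4) := by
          rw [add_comm]; exact hsup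
        have h7 : truncVar f T' b (c / 4) + q < ((n + 1 : ℕ) : ℝ≥0∞) * q :=
          lt_of_lt_of_le (lt_of_lt_of_le h5 h6) hbud.le
        have h8 : ((n + 1 : ℕ) : ℝ≥0∞) * q = (n : ℝ≥0∞) * q + q := by push_cast; ring
        rw [h8] at h7
        exact (ENNReal.add_lt_add_iff_right (by simp [hqdef])).mp h7
      obtain ⟨φ', v', hmono', hstart', hdist', hsum'⟩ :=
        ih T' (hax.trans hxT'.le) hT'b hbud' (ε / 2) (by linarith)
      set m' := φ' T' with hm'def
      set Φ : ℝ → ℕ := fun t => if t < T' then (if t ≤ τ' then 0 else 1) else 2 + (φ' t - m')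
        with hΦdef
      set v : ℕ → E := fun k => if k = 0 then f x else if k = 1 then vmid else v' (m' + (k - 2))
        with hvdef
      have hΦmono : Monotone Φ := by
        intro s t hst
        simp only [hΦdef]
        by_cases hs : s < T' <;> by_cases ht : t < T'
        · rw [if_pos hs, if_pos ht]
          split_ifs <;> first | omega | linarith
        · rw [if_pos hs, if_neg ht]
          split_ifs <;> omega
        · exact absurd (lt_of_le_of_lt hst ht) hs
        · rw [if_neg hs, if_neg ht]
          have : φ' s ≤ φ' t := hmono' hst
          omega
      have hΦx : Φ x = 0 := by
        simp only [hΦdef]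
        rw [if_pos hxT', if_pos hxτ']
      have hΦb : Φ b = 2 + (φ' b - m') := by
        simp only [hΦdef]
        rw [if_neg (not_lt.mpr hT'b)]
      have hvΦ : ∀ t, T' ≤ t → v (Φ t) = v' (φ' t) := by
        intro t hT't
        have h2 : m' ≤ φ' t := hmono' hT't
        simp only [hΦdef, hvdef, if_neg (not_lt.mpr hT't)]
        rw [if_neg (by omega : ¬(2 + (φ' t - m') = 0)), if_neg (by omega : ¬(2 + (φ' t - m') = 1))]
        congr 1
        omega
      have hv0 : v 0 = f x := by simp [hvdef]
      have hv1 : v 1 = vmid := by simp [hvdef]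
      have hvk : ∀ k, v (k + 2) = v' (m' + k) := by
        intro k
        simp only [hvdef]
        rw [if_neg (by omega), if_neg (by omega)]
        norm_num
      have hv2 : v 2 = f T' := by
        have := hvk 0
        simp at this
        rw [show (2 : ℕ) = 0 + 2 by rfl, this]
        exact hstart'
      have hstart : v (Φ x) = f x := by rw [hΦx, hv0]
      have hdist : ∀ t, x ≤ t → t ≤ b → dist (f t) (v (Φ t)) ≤ c / 2 := by
        intro t hxt htb
        by_cases h1 : t < T'
        · by_cases h2 : t ≤ τ'
          · have hΦt : Φ t = 0 := by simp only [hΦdef]; rw [if_pos h1, if_pos h2]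
            rw [hΦt, hv0]
            exact hP3 t hxt h2
          · have hΦt : Φ t = 1 := by simp only [hΦdef]; rw [if_pos h1, if_neg h2]
            rw [hΦt, hv1]
            exact hPmid t (not_le.mp h2) h1
        · rw [hvΦ t (not_lt.mp h1)]
          exact hdist' t (not_lt.mp h1) htb
      refine ⟨Φ, v, hΦmono, hstart, hdist, ?_⟩
      rw [hΦx, hΦb]
      set r := φ' b - m' with hrdef
      have hm'b : m' ≤ φ' b := hmono' hT'b
      have hsplit0 : ∑ k ∈ Finset.Ico 0 (2 + r), ENNReal.ofReal (dist (v k) (v (k + 1))) =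
          ENNReal.ofReal (dist (v 0) (v (0 + 1))) +
          ENNReal.ofReal (dist (v (0 + 1)) (v (0 + 1 + 1))) +
          ∑ i ∈ Finset.range r, ENNReal.ofReal (dist (v (i + 1 + 1)) (v (i + 1 + 1 + 1))) := by
        rw [← Finset.range_eq_Ico, add_comm 2 r, Finset.sum_range_succ', Finset.sum_range_succ']
        ring
      have hsplit : ∑ k ∈ Finset.Ico 0 (2 + r), ENNReal.ofReal (dist (v k) (v (k + 1))) =
          ENNReal.ofReal (dist (v 0) (v 1)) + ENNReal.ofReal (dist (v 1) (v 2)) +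
          ∑ i ∈ Finset.range r, ENNReal.ofReal (dist (v (i + 2)) (v (i + 2 + 1))) := by
        rw [hsplit0]
      have hsum2 : ∑ i ∈ Finset.range r, ENNReal.ofReal (dist (v (i + 2)) (v (i + 2 + 1))) =
          ∑ k ∈ Finset.Ico m' (φ' b), ENNReal.ofReal (dist (v' k) (v' (k + 1))) := by
        rw [Finset.sum_Ico_eq_sum_range]
        apply Finset.sum_congr rfl
        intro i _
        rw [show i + 2 + 1 = (i + 1) + 2 by ring, hvk, hvk, add_assoc]
      rw [hsplit, hsum2]
      have hglue2 : ENNReal.ofReal (dist (v 0) (v 1)) + ENNReal.ofReal (dist (v 1) (v 2)) ≤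
          2 * ENNReal.ofReal (D - c / 4) + ENNReal.ofReal (ε / 2) := by
        rw [← ENNReal.ofReal_add dist_nonneg dist_nonneg]
        calc ENNReal.ofReal (dist (v 0) (v 1) + dist (v 1) (v 2))
            ≤ ENNReal.ofReal (2 * (D - c / 4) + ε / 2) := by
              apply ENNReal.ofReal_le_ofReal
              rw [hv0, hv1, hv2]
              linarith [hglue, hD]
          _ = 2 * ENNReal.ofReal (D - c / 4) + ENNReal.ofReal (ε / 2) := by
              rw [ENNReal.ofReal_add (by linarith) (by linarith),
                ENNReal.ofReal_mul (by norm_num : (0:ℝ) ≤ 2)]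
              norm_num
      calc ENNReal.ofReal (dist (v 0) (v 1)) + ENNReal.ofReal (dist (v 1) (v 2)) +
            ∑ k ∈ Finset.Ico m' (φ' b), ENNReal.ofReal (dist (v' k) (v' (k + 1)))
          ≤ (2 * ENNReal.ofReal (D - c / 4) + ENNReal.ofReal (ε / 2)) +
            (2 * truncVar f T' b (c / 4) + ENNReal.ofReal (ε / 2)) :=
            add_le_add hglue2 hsum'
        _ = 2 * (ENNReal.ofReal (D - c / 4) + truncVar f T' b (c / 4)) +
            (ENNReal.ofReal (ε / 2) + ENNReal.ofReal (ε / 2)) := by ring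
        _ ≤ 2 * truncVar f x b (c / 4) + ENNReal.ofReal ε := by
            apply add_le_add
            · exact mul_le_mul_right hsup 2
            · rw [← ENNReal.ofReal_add (by linarith) (by linarith)]
              apply ENNReal.ofReal_le_ofReal
              linarith

end TVAux


theorem stmt_2 {E : Type*} [PseudoMetricSpace E] (a b c : ℝ) (hab : a < b) (hc : 0 < c)
    (f : ℝ → E) (hf : Regulated f a b) :
    truncVar f a b c ≤
      (⨅ (g : ℝ → E) (_ : ∀ t ∈ Set.Icc a b, dist (f t) (g t) ≤ c / 2), truncVar g a b 0) ∧
    (⨅ (g : ℝ → E) (_ : ∀ t ∈ Set.Icc a b, dist (f t) (g t) ≤ c / 2), truncVar g a b 0) ≤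
      2 * truncVar f a b (c / 4) := by
  constructor
  · apply le_iInf; intro g; apply le_iInf; intro hg
    apply iSup_le; intro n; apply iSup_le; intro t; apply iSup_le; intro hm
    apply iSup_le; intro hmem
    refine le_trans ?_ (TVAux.le_truncVar (f := g) (δ := 0) hm hmem)
    apply ENNReal.ofReal_le_ofReal
    apply Finset.sum_le_sum
    intro i _
    have h1 := hg (t i.succ) (hmem _)
    have h2 := hg (t i.castSucc) (hmem _)
    have h3 : dist (f (t i.succ)) (f (t i.castSucc)) ≤
        dist (g (t i.succ)) (g (t i.castSucc)) + c := by
      have h5 := dist_triangle4 (f (t i.succ)) (g (t i.succ)) (g (t i.castSucc)) (f (t i.castSucc))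
      have h4 : dist (g (t i.castSucc)) (f (t i.castSucc)) =
          dist (f (t i.castSucc)) (g (t i.castSucc)) := dist_comm _ _
      linarith
    apply max_le
    · exact le_trans (by linarith : dist (f (t i.succ)) (f (t i.castSucc)) - c ≤
        dist (g (t i.succ)) (g (t i.castSucc)) - 0) (le_max_left _ _)
    · exact le_max_right _ _
  · by_cases hT : truncVar f a b (c / 4) = ⊤
    · rw [hT, ENNReal.mul_top (by norm_num)]
      exact le_top
    · set q := ENNReal.ofReal (c / 4) with hq
      have hq0 : q ≠ 0 := by
        rw [hq, Ne, ENNReal.ofReal_eq_zero]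
        push_neg
        linarith
      have hqt : q ≠ ⊤ := ENNReal.ofReal_ne_top
      obtain ⟨n, hn⟩ := ENNReal.exists_nat_gt (ENNReal.div_lt_top hT hq0).ne
      have hbud : truncVar f a b (c / 4) < n * q := by
        calc truncVar f a b (c / 4) = truncVar f a b (c / 4) / q * q :=
              (ENNReal.div_mul_cancel hq0 hqt).symm
          _ < n * q := ENNReal.mul_lt_mul_left hq0 hqt hn
      apply ENNReal.le_of_forall_pos_le_add
      intro ε hε _
      obtain ⟨φ, v, hmono, hstart, hdist, hsum⟩ :=
        TVAux.main_ind a b c hc f hf n a le_rfl hab.le hbud ε (NNReal.coe_pos.mpr hε)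
      have hgprop : ∀ t ∈ Set.Icc a b, dist (f t) ((fun s => v (φ s)) t) ≤ c / 2 :=
        fun t ht => hdist t ht.1 ht.2
      calc (⨅ (g : ℝ → E) (_ : ∀ t ∈ Set.Icc a b, dist (f t) (g t) ≤ c / 2), truncVar g a b 0)
          ≤ truncVar (fun s => v (φ s)) a b 0 := iInf₂_le _ hgprop
        _ ≤ ∑ k ∈ Finset.Ico (φ a) (φ b), ENNReal.ofReal (dist (v k) (v (k + 1))) :=
            TVAux.stepTV v φ hmono a b
        _ ≤ 2 * truncVar f a b (c / 4) + ENNReal.ofReal (ε : ℝ) := hsum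
        _ = 2 * truncVar f a b (c / 4) + (ε : ℝ≥0∞) := by rw [ENNReal.ofReal_coe_nnreal]
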